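/- arXiv:2111.07551 — 12 statements merged into one kernel-verified Lean document; each statement's English description precedes it below -/
import Mathlib

section
/- In a finite inverse monoid S, the product of two factorizable elements is factorizable; hence S is factorizable if and only if every element of a generating set of S is factorizable. -/
/-- An element of a monoid is factorizable if it is the product of a unit
and an idempotent. -/
def Factorizable {M : Type*} [Monoid M] (s : M) : Prop :=
  ∃ u e : M, IsUnit u ∧ e * e = e ∧ s = u * e

/-- In a finite inverse monoid (every element has a unique inverse, given by
`inv`), the product of two factorizable elements is factorizable; hence the
monoid is factorizable iff every element of a generating set (as an inverse
monoid, i.e. generators together with their inverses) is factorizable. -/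
theorem factorizable_mul_and_generators (M : Type*) [Monoid M] [Fintype M]
    (inv : M → M)
    (h1 : ∀ s : M, s * inv s * s = s) (h2 : ∀ s : M, inv s * s * inv s = inv s)
    (huniq : ∀ s t : M, s * t * s = s → t * s * t = t → t = inv s) :
    (∀ s t : M, Factorizable s → Factorizable t → Factorizable (s * t)) ∧
    (∀ G : Set M, Submonoid.closure (G ∪ inv '' G) = ⊤ →
      ((∀ x : M, Factorizable x) ↔ ∀ g ∈ G, Factorizable g)) := by
  classical
  -- inv is an involution
  have hinvinv : ∀ s : M, inv (inv s) = s := fun s =>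
    ((huniq (inv s) s (h2 s) (h1 s))).symm
  -- an idempotent is its own inverse
  have hidem_inv : ∀ e : M, e * e = e → inv e = e := by
    intro e he
    have := huniq e e (by rw [he, he]) (by rw [he, he])
    exact this.symm
  -- product of idempotents is idempotent
  have hIdemMul : ∀ e f : M, e * e = e → f * f = f → (e * f) * (e * f) = e * f := by
    intro e f he hf
    set x := inv (e * f) with hxdef
    have hx1 : (e * f) * x * (e * f) = e * f := h1 _
    have hx2 : x * (e * f) * x = x := h2 _
    have heL : ∀ y : M, e * (e * y) = e * y := fun y => by rw [← mul_assoc, he]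
    have hfL : ∀ y : M, f * (f * y) = f * y := fun y => by rw [← mul_assoc, hf]
    have hx1' : e * (f * (x * (e * f))) = e * f := by
      simpa [mul_assoc] using hx1
    have hx2' : x * (e * (f * x)) = x := by simpa [mul_assoc] using hx2
    have hx2L : ∀ y : M, x * (e * (f * (x * y))) = x * y := fun y => by
      have := congrArg (· * y) hx2
      simpa [mul_assoc] using this
    -- g = f * x * e is an inverse of e*f, hence equals x; and g is idempotent
    have hg1 : (e * f) * (f * (x * e)) * (e * f) = e * f := by
      simp only [mul_assoc, heL, hfL]
      simpa [mul_assoc] using hx1'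
    have hg2 : (f * (x * e)) * (e * f) * (f * (x * e)) = f * (x * e) := by
      simp only [mul_assoc, heL, hfL, hx2L]
    have hgx : f * (x * e) = x := by
      have := huniq (e * f) (f * (x * e)) hg1 hg2
      simpa [hxdef] using this
    have hxx : x * x = x := by
      conv_lhs => rw [← hgx]
      simp only [mul_assoc, heL, hfL, hx2L]
      simpa [mul_assoc] using hgx
    have : inv x = x := hidem_inv x hxx
    have : e * f = x := by rw [← hinvinv (e * f), ← hxdef, this]
    rw [this]; exact hxx
  -- idempotents commute
  have hcomm : ∀ e f : M, e * e = e → f * f = f → e * f = f * e := by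
    intro e f he hf
    have hef : (e * f) * (e * f) = e * f := hIdemMul e f he hf
    have hfe : (f * e) * (f * e) = f * e := hIdemMul f e hf he
    have heL : ∀ y : M, e * (e * y) = e * y := fun y => by rw [← mul_assoc, he]
    have hfL : ∀ y : M, f * (f * y) = f * y := fun y => by rw [← mul_assoc, hf]
    have hef' : e * (f * (e * f)) = e * f := by simpa [mul_assoc] using hef
    have hfe' : f * (e * (f * e)) = f * e := by simpa [mul_assoc] using hfe
    have hA : (e * f) * (f * e) * (e * f) = e * f := by
      simp only [mul_assoc, heL, hfL]; exact hef'
    have hB : (f * e) * (e * f) * (f * e) = f * e := by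
      simp only [mul_assoc, heL, hfL]; exact hfe'
    have h3 : f * e = inv (e * f) := huniq (e * f) (f * e) hA hB
    rw [h3, hidem_inv (e * f) hef]
  -- product of factorizables is factorizable
  have part1 : ∀ s t : M, Factorizable s → Factorizable t → Factorizable (s * t) := by
    rintro s t ⟨u, e, hu, he, rfl⟩ ⟨v, f, hv, hf, rfl⟩
    obtain ⟨V, rfl⟩ := hv
    refine ⟨u * V, (↑V⁻¹ * e * V) * f, hu.mul V.isUnit, ?_, ?_⟩
    · have he1 : (↑V⁻¹ * e * (V : M)) * (↑V⁻¹ * e * V) = ↑V⁻¹ * e * V := by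
        simp [mul_assoc, ← mul_assoc e e, he]
      exact hIdemMul _ _ he1 hf
    · simp [mul_assoc]
  -- inv of a factorizable is factorizable
  have hinvFact : ∀ s : M, Factorizable s → Factorizable (inv s) := by
    rintro s ⟨u, e, hu, he, rfl⟩
    obtain ⟨U, rfl⟩ := hu
    have hA : (↑U * e) * (e * ↑U⁻¹) * ((U : M) * e) = ↑U * e := by
      simp [mul_assoc, ← mul_assoc e e, he]
    have hB : (e * ↑U⁻¹) * ((U : M) * e) * (e * ↑U⁻¹) = e * ↑U⁻¹ := by
      simp [mul_assoc, ← mul_assoc e e, he]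
    have hinv : e * ↑U⁻¹ = inv ((U : M) * e) := huniq _ _ hA hB
    refine ⟨↑U⁻¹, ↑U * e * ↑U⁻¹, U⁻¹.isUnit, ?_, ?_⟩
    · simp [mul_assoc, ← mul_assoc e e, he]
    · rw [← hinv]; simp [mul_assoc]
  refine ⟨part1, ?_⟩
  intro G hG
  constructor
  · intro hx g _; exact hx g
  · intro hgen x
    have hmem : x ∈ Submonoid.closure (G ∪ inv '' G) := by rw [hG]; trivial
    induction hmem using Submonoid.closure_induction with
    | mem y hy =>
      rcases hy with hy | ⟨g, hg, rfl⟩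
      · exact hgen y hy
      · exact hinvFact g (hgen g hg)
    | one => exact ⟨1, 1, isUnit_one, by simp, by simp⟩
    | mul a b _ _ ha hb => exact part1 a b ha hb
end

section
/- The relation ∼_o (a ∼_o b iff there exist g, h in S with ag = gb and bh = ha) is an equivalence relation on any semigroup S with identity, and it coincides with conjugacy when S is a group. -/
/-- The relation `∼ₒ` (`a ∼ₒ b` iff `a * g = g * b` and `b * h = h * a` for
some `g, h`) is an equivalence relation on any monoid, and it coincides with
conjugacy on any group. -/
theorem sim_o_equivalence_and_group_conj (M : Type*) [Monoid M]
    (G : Type*) [Group G] :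
    Equivalence (fun a b : M => ∃ g h : M, a * g = g * b ∧ b * h = h * a) ∧
    (∀ a b : G, (∃ g h : G, a * g = g * b ∧ b * h = h * a) ↔ IsConj a b) := by
  constructor
  · constructor
    · intro a; exact ⟨1, 1, by simp, by simp⟩
    · rintro a b ⟨g, h, hg, hh⟩; exact ⟨h, g, hh, hg⟩
    · rintro a b c ⟨g, h, hg, hh⟩ ⟨g', h', hg', hh'⟩
      refine ⟨g * g', h' * h, ?_, ?_⟩
      · rw [← mul_assoc, hg, mul_assoc, hg', mul_assoc]
      · rw [← mul_assoc, hh', mul_assoc, hh, mul_assoc]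
  · intro a b
    constructor
    · rintro ⟨g, h, hg, -⟩
      refine ⟨⟨g⁻¹, g, inv_mul_cancel g, mul_inv_cancel g⟩, ?_⟩
      show g⁻¹ * a = b * g⁻¹
      rw [inv_mul_eq_iff_eq_mul, ← mul_assoc, ← hg, mul_assoc, mul_inv_cancel,
        mul_one]
    · rintro ⟨u, hu⟩
      have h1 : (u : G) * a = b * u := hu
      have h2 : a = (u : G)⁻¹ * b * u := by
        rw [mul_assoc, ← h1, ← mul_assoc, inv_mul_cancel, one_mul]
      exact ⟨(u : G)⁻¹, u, by rw [h2]; group, by rw [h2]; group⟩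
end

section
/- For every partition of a countable set X, there exists a semigroup structure on X whose ∼_o-conjugacy classes are exactly the blocks of the partition. Concretely, indexing the blocks by elements j of a countable (finite cyclic or infinite) additive monoid and the block X_j elements as pairs (i,j), the operation (a,b)(c,d) := (1, b+d) is associative and two elements (a,b), (c,d) satisfy ∼_o iff b = d. -/
/-- The multiplication `(a,b)(c,d) := (1, b+d)` on the disjoint union of the
blocks `X j` (indexed by a cancellative commutative additive monoid, e.g.
`ZMod κ` or `ℕ`), where `one j` is the distinguished element of block `X j`. -/
def sigmaMulO {J : Type*} [Add J] {X : J → Type*} (one : ∀ j, X j)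
    (p q : Σ j, X j) : Σ j, X j :=
  ⟨p.1 + q.1, one _⟩

/-- For every partition of a countable set (given here as blocks `X j` indexed
by a countable cancellative commutative additive monoid `J`, each block being
nonempty with a distinguished element `one j`), the operation
`(a,b)(c,d) := (1, b+d)` is associative, and two elements are `∼ₒ`-conjugate
iff they lie in the same block.  Hence `∼ₒ` is partition covering for any
countable set. -/
theorem sim_o_partition_covering (J : Type*) [AddCancelCommMonoid J]
    [Countable J] (X : J → Type*) (one : ∀ j, X j) :
    (∀ p q r : Σ j, X j,
      sigmaMulO one (sigmaMulO one p q) r = sigmaMulO one p (sigmaMulO one q r)) ∧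
    (∀ p q : Σ j, X j,
      (∃ g h : Σ j, X j,
          sigmaMulO one p g = sigmaMulO one g q ∧
          sigmaMulO one q h = sigmaMulO one h p) ↔ p.1 = q.1) := by
  constructor
  · intro p q r
    simp only [sigmaMulO]
    congr 1 <;> rw [add_assoc]
  · intro p q
    constructor
    · rintro ⟨g, h, h1, h2⟩
      have := congrArg Sigma.fst h1
      simp only [sigmaMulO] at this
      exact add_left_cancel (by rw [add_comm, this])
    · intro h
      exact by
        refine ⟨p, p, ?_, ?_⟩ <;> simp only [sigmaMulO] <;> congr 1 <;> rw [h, add_comm]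
end

section
/- Let X be a finite set partitioned into blocks {X_j}, with X_0 a block of maximal size, and elements of X_j written as pairs (i,j) with 1 ≤ i ≤ |X_j|. The operation (a,b)(c,d) := (a,b) if b = d, and (a,0) if b ≠ d, is associative, and the resulting semigroup's ∼_p-classes are exactly the blocks: (a,b) ∼_p (c,d) iff b = d. -/
/-- The multiplication `(a,b)(c,d) := (a,b)` if `b = d` and `(a,0)` if
`b ≠ d`, on the disjoint union of blocks `Fin (m j)` indexed by `j : J`
(with distinguished block `0` of maximal size, so that `(a,0)` makes sense). -/
def sigmaMulP {J : Type*} [DecidableEq J] [Zero J] {m : J → ℕ}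
    (hm : ∀ j, m j ≤ m 0) (p q : Σ j, Fin (m j)) : Σ j, Fin (m j) :=
  if p.1 = q.1 then p else ⟨0, Fin.castLE (hm p.1) p.2⟩

private lemma mul_fst {J : Type*} [DecidableEq J] [Zero J] {m : J → ℕ}
    (hm : ∀ j, m j ≤ m 0) (p q : Σ j, Fin (m j)) :
    (sigmaMulP hm p q).1 = if p.1 = q.1 then p.1 else 0 := by
  unfold sigmaMulP; split_ifs <;> rfl

private lemma mul_snd {J : Type*} [DecidableEq J] [Zero J] {m : J → ℕ}
    (hm : ∀ j, m j ≤ m 0) (p q : Σ j, Fin (m j)) :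
    ((sigmaMulP hm p q).2 : ℕ) = (p.2 : ℕ) := by
  by_cases h : p.1 = q.1
  · rw [sigmaMulP, if_pos h]
  · rw [sigmaMulP, if_neg h, Fin.coe_castLE]

private lemma sig_ext {J : Type*} {m : J → ℕ} {s t : Σ j, Fin (m j)}
    (h1 : s.1 = t.1) (h2 : (s.2 : ℕ) = (t.2 : ℕ)) : s = t := by
  obtain ⟨a, b⟩ := s; obtain ⟨c, d⟩ := t
  cases h1
  simp only at h2
  exact congrArg _ (Fin.ext h2)

/-- For a finite set partitioned into nonempty blocks `X_j = Fin (m j)` with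
`X_0` of maximal size, the operation `(a,b)(c,d) := (a,b)` if `b = d` and
`(a,0)` otherwise is associative, and the `∼ₚ`-classes
(`p ∼ₚ q` iff `p = u*v` and `q = v*u` for some `u,v`)
are exactly the blocks. -/
theorem sim_p_partition_covering (J : Type*) [DecidableEq J] [Fintype J]
    [Zero J] (m : J → ℕ) (hm : ∀ j, m j ≤ m 0) (hpos : ∀ j, 0 < m j) :
    (∀ p q r : Σ j, Fin (m j),
      sigmaMulP hm (sigmaMulP hm p q) r = sigmaMulP hm p (sigmaMulP hm q r)) ∧
    (∀ p q : Σ j, Fin (m j),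
      (∃ u v : Σ j, Fin (m j), p = sigmaMulP hm u v ∧ q = sigmaMulP hm v u) ↔
        p.1 = q.1) := by
  constructor
  · intro p q r
    apply sig_ext
    · simp only [mul_fst]
      split_ifs <;> simp_all
    · simp only [mul_snd]
  · intro p q
    constructor
    · rintro ⟨u, v, rfl, rfl⟩
      simp only [mul_fst]
      split_ifs <;> simp_all
    · intro h
      refine ⟨p, q, ?_, ?_⟩ <;> simp [sigmaMulP, h]
end

section
/- In the semigroup on a finite partitioned set X with operation (a,b)(c,d) := (a,b) if b = d and (a,0) if b ≠ d (where X_0 is a block of maximal size), every element is idempotent, and the trace conjugacy relation ∼_tr coincides with ∼_p: both relate (a,b) and (c,d) exactly when b = d. -/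
/-- In the semigroup on a finite partitioned set with operation
`(a,b)(c,d) := (a,b)` if `b = d` and `(a,0)` otherwise, every element is
idempotent (so the idempotent power is `ω = 1`), and the trace conjugacy
relation `∼_tr` (there are mutually inverse `g, h` with `h*g = p^ω`,
`g*h = q^ω` and `g*p^(ω+1)*h = q^(ω+1)`) coincides with `∼ₚ`: both relate two
elements exactly when they lie in the same block. -/
theorem sim_tr_eq_sim_p (J : Type*) [DecidableEq J] [Fintype J] [Zero J]
    (m : J → ℕ) (hm : ∀ j, m j ≤ m 0) (hpos : ∀ j, 0 < m j) :
    (∀ p : Σ j, Fin (m j), sigmaMulP hm p p = p) ∧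
    (∀ p q : Σ j, Fin (m j),
      ((∃ g h : Σ j, Fin (m j),
          sigmaMulP hm (sigmaMulP hm g h) g = g ∧
          sigmaMulP hm (sigmaMulP hm h g) h = h ∧
          sigmaMulP hm h g = p ∧
          sigmaMulP hm g h = q ∧
          sigmaMulP hm (sigmaMulP hm g (sigmaMulP hm p p)) h = sigmaMulP hm q q) ↔
        (∃ u v : Σ j, Fin (m j), p = sigmaMulP hm u v ∧ q = sigmaMulP hm v u)) ∧
      ((∃ u v : Σ j, Fin (m j), p = sigmaMulP hm u v ∧ q = sigmaMulP hm v u) ↔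
        p.1 = q.1)) := by
  have idem : ∀ p : Σ j, Fin (m j), sigmaMulP hm p p = p := by
    intro p; simp [sigmaMulP]
  refine ⟨idem, fun p q => ?_⟩
  -- the block of a product
  have fst01 : ∀ u v : Σ j, Fin (m j),
      (sigmaMulP hm u v).1 = u.1 ∨ (sigmaMulP hm u v).1 = 0 := by
    intro u v
    unfold sigmaMulP
    split <;> simp
  have meq : ∀ u v : Σ j, Fin (m j), u.1 = v.1 → sigmaMulP hm u v = u := by
    intro u v h; exact if_pos h
  have same : ∀ u v : Σ j, Fin (m j),
      (sigmaMulP hm u v).1 = (sigmaMulP hm v u).1 := by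
    intro u v
    by_cases huv : u.1 = v.1
    · rw [meq u v huv, meq v u huv.symm, huv]
    · simp [sigmaMulP, huv, Ne.symm huv]
  have hC : (∃ u v : Σ j, Fin (m j), p = sigmaMulP hm u v ∧ q = sigmaMulP hm v u) ↔
      p.1 = q.1 := by
    constructor
    · rintro ⟨u, v, hp, hq⟩
      rw [hp, hq]; exact same u v
    · intro hpq
      refine ⟨p, q, ?_, ?_⟩
      · exact (meq p q hpq).symm
      · exact (meq q p hpq.symm).symm
  refine ⟨?_, hC⟩
  rw [hC]
  constructor
  · rintro ⟨g, h, _, _, hhg, hgh, _⟩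
    rw [← hhg, ← hgh]
    exact (same h g)
  · intro hpq
    refine ⟨q, p, ?_, ?_, ?_, ?_, ?_⟩
    · rw [meq q p hpq.symm, meq q q rfl]
    · rw [meq p q hpq, meq p p rfl]
    · exact meq p q hpq
    · exact meq q p hpq.symm
    · rw [idem p, meq q p hpq.symm, meq q p hpq.symm, idem q]
end

section
/- If S is an inverse semigroup of partial bijections on [n] generated (as an inverse semigroup) by a₁,...,a_k ∈ I_n, and S has a zero element 0, then for any edge (p,q) with p ≠ q of the transformation graph (i.e., p·a_i = q for some generator), the point q is not in the domain of 0, and q is connected to the sink vertex n+1 in the transformation graph. -/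
/-- Membership in the inverse semigroup of partial bijections generated by
`a 1, ..., a k` (closure under composition and inversion). -/
inductive InvGen {n k : ℕ} (a : Fin k → PEquiv (Fin n) (Fin n)) :
    PEquiv (Fin n) (Fin n) → Prop
  | base (i : Fin k) : InvGen a (a i)
  | symm {s : PEquiv (Fin n) (Fin n)} : InvGen a s → InvGen a s.symm
  | mul {s t : PEquiv (Fin n) (Fin n)} :
      InvGen a s → InvGen a t → InvGen a (s.trans t)

/-- The edge relation underlying the transformation graph `Γ(A, [n+1])`:
vertices are `Option (Fin n)` where `none` plays the role of the extra sink
vertex `n+1`; `some p` relates to `some q` if some generator maps `p` to `q`,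
and `some p` relates to `none` if `p` is outside the domain of some
generator. -/
def transfRel {n k : ℕ} (a : Fin k → PEquiv (Fin n) (Fin n)) :
    Option (Fin n) → Option (Fin n) → Prop
  | some p, some q => ∃ i, a i p = some q
  | some p, none => ∃ i, a i p = none
  | none, _ => False

/-- If the inverse semigroup generated by `a 1, ..., a k` has a zero element
`z`, then for any edge `(p, q)` of the transformation graph with `p ≠ q`
coming from a generator (`p ⬝ aᵢ = q`), the point `q` is not in the domain of
`z`, and `q` is connected to the sink vertex `n+1` in the transformation
graph. -/
theorem zero_elt_edge_connected_to_sink (n k : ℕ)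
    (a : Fin k → PEquiv (Fin n) (Fin n)) (z : PEquiv (Fin n) (Fin n))
    (hzmem : InvGen a z)
    (hz : ∀ s : PEquiv (Fin n) (Fin n), InvGen a s →
      s.trans z = z ∧ z.trans s = z) :
    ∀ p q : Fin n, p ≠ q → (∃ i, a i p = some q) →
      z q = none ∧
      (SimpleGraph.fromRel (transfRel a)).Reachable (some q) none := by
  intro p q hpq hpq'
  obtain ⟨i, hi⟩ := hpq'
  set G := SimpleGraph.fromRel (transfRel a) with hG
  -- z fixes every point of its domain
  have hfix : ∀ x r : Fin n, z x = some r → x = r := by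
    intro x r hx
    have h1 : z.trans z.symm = z := (hz z.symm (InvGen.symm hzmem)).2
    have h2 : (z.trans z.symm) x = some x :=
      (PEquiv.trans_eq_some _ _ _ _).2 ⟨r, hx, (PEquiv.eq_some_iff z).2 hx⟩
    rw [h1, hx] at h2
    exact (Option.some_injective _ h2).symm
  have hai : (a i).trans z = z := (hz (a i) (InvGen.base i)).1
  have hzq : z q = z p := by
    have := congrArg (fun f : PEquiv (Fin n) (Fin n) => f p) hai
    simpa [PEquiv.trans, hi] using this
  have hzqnone : z q = none := by
    cases hq : z q with
    | none => rfl
    | some r =>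
      have hrq : q = r := hfix q r hq
      rw [hq] at hzq
      have : p = r := hfix p r hzq.symm
      exact absurd (this.trans hrq.symm) hpq
  refine ⟨hzqnone, ?_⟩
  by_contra hR
  have key : ∀ s, InvGen a s → ∀ x : Fin n, ¬ G.Reachable (some x) none →
      ∃ y, s x = some y ∧ ¬ G.Reachable (some y) none := by
    intro s hs
    induction hs with
    | base j =>
      intro x hx
      cases hax : a j x with
      | none =>
        exact absurd (SimpleGraph.Adj.reachable
          (by simp [hG, SimpleGraph.fromRel_adj, transfRel]; exact ⟨j, hax⟩)) hx
      | some y =>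
        refine ⟨y, rfl, fun hy => hx ?_⟩
        by_cases hxy : x = y
        · exact hxy ▸ hy
        · refine (SimpleGraph.Adj.reachable ?_).trans hy
          simp only [hG, SimpleGraph.fromRel_adj, transfRel]
          exact ⟨by simpa using hxy, Or.inl ⟨j, hax⟩⟩
    | @symm s' hs ih =>
      intro x hx
      -- s' maps the (finite) set of non-reachable points injectively into itself,
      -- hence bijectively; so x has a preimage there.
      let T := {x : Fin n // ¬ G.Reachable (some x) none}
      let f : T → T := fun t =>
        ⟨(ih t.1 t.2).choose, (ih t.1 t.2).choose_spec.2⟩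
      have hf : ∀ t : T, s' t.1 = some (f t).1 := fun t => (ih t.1 t.2).choose_spec.1
      have finj : Function.Injective f := by
        intro t1 t2 h
        have h1 : s' t1.1 = some (f t1).1 := hf t1
        have h2 : s' t2.1 = some (f t2).1 := hf t2
        rw [h] at h1
        have := (PEquiv.eq_some_iff s').1 ((PEquiv.eq_some_iff s').2 h1)
        -- use injectivity via symm
        have e1 : s'.symm (f t2).1 = some t1.1 := (PEquiv.eq_some_iff s').2 h1
        have e2 : s'.symm (f t2).1 = some t2.1 := (PEquiv.eq_some_iff s').2 h2
        exact Subtype.ext (Option.some_injective _ (e1.symm.trans e2))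
      have fsurj : Function.Surjective f := Finite.surjective_of_injective finj
      obtain ⟨t, ht⟩ := fsurj ⟨x, hx⟩
      refine ⟨t.1, ?_, t.2⟩
      have : s' t.1 = some x := by rw [hf t, ht]
      exact (PEquiv.eq_some_iff s').2 this
    | mul hs ht ihs iht =>
      intro x hx
      obtain ⟨y, hy, hy'⟩ := ihs x hx
      obtain ⟨w, hw, hw'⟩ := iht y hy'
      exact ⟨w, (PEquiv.trans_eq_some _ _ _ _).2 ⟨y, hy, hw⟩, hw'⟩
  obtain ⟨y, hy, _⟩ := key z hzmem q hR
  rw [hzqnone] at hy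
  cases hy
end

section
/- In a semigroup of partial bijections on a finite set, any right zero element is also a left zero element. -/
/-- In a semigroup of partial bijections on a finite set (a subset `S` of
`I_n` closed under composition), any right zero element is also a left zero
element. -/
theorem right_zero_is_left_zero (n : ℕ) (S : Set (PEquiv (Fin n) (Fin n)))
    (hS : ∀ a ∈ S, ∀ b ∈ S, a.trans b ∈ S)
    (z : PEquiv (Fin n) (Fin n)) (hz : z ∈ S)
    (hrz : ∀ a ∈ S, a.trans z = z) :
    ∀ a ∈ S, z.trans a = z := by
  have hzz := hrz z hz
  -- z is a partial identity
  have hid : ∀ x y, z x = some y → y = x := by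
    intro x y hxy
    have h1 : (z.trans z) x = z x := by rw [hzz]
    have h2 : z y = some y := by
      simpa [PEquiv.trans, hxy] using h1
    exact z.inj h2 hxy
  intro a ha
  have hza := hrz a ha
  ext x
  have h1 : (a.trans z) x = z x := by rw [hza]
  cases hx : z x with
  | none => simp [PEquiv.trans, hx]
  | some y =>
    have hyx : y = x := hid x y hx
    subst hyx
    -- from h1: (a x).bind z = some y, so a y = some y
    have h2 : (a y).bind z = some y := by simpa [PEquiv.trans, hx] using h1
    obtain ⟨b, hab, hbz⟩ := Option.bind_eq_some_iff.mp h2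
    have : y = b := hid b y hbz
    subst this
    simp [PEquiv.trans, hx, hab, eq_comm]
end

section
/- If a directed graph G contains a cycle (and no self-loops), then in the partial bijection semigroup generated by the edge maps a_{(u,v)}, there is a non-central idempotent, and the semigroup is not R-trivial. -/
/-- Membership in the partial bijection semigroup generated by the edge maps
`a_{(u,v)} = PEquiv.single u v` (domain `{u}`, sending `u` to `v`) of a
directed graph with edge relation `E`. -/
inductive EdgeGen {V : Type*} [DecidableEq V] (E : V → V → Prop) :
    PEquiv V V → Prop
  | single {u v : V} : E u v → EdgeGen E (PEquiv.single u v)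
  | mul {s t : PEquiv V V} : EdgeGen E s → EdgeGen E t → EdgeGen E (s.trans t)

lemma edgeGen_single_of_transGen {V : Type*} [DecidableEq V] {E : V → V → Prop}
    {a b : V} (h : Relation.TransGen E a b) : EdgeGen E (PEquiv.single a b) := by
  induction h with
  | single h => exact .single h
  | @tail b c _ h ih =>
    rw [← PEquiv.single_trans_single a b c]
    exact .mul ih (.single h)

lemma single_ne_of_ne {V : Type*} [DecidableEq V] {v a b : V} (h : a ≠ b) :
    PEquiv.single v a ≠ PEquiv.single v b := fun hh => by
  have := congrArg (fun p : PEquiv V V => p v) hh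
  simp [PEquiv.single_apply] at this
  exact h this

/-- If a finite directed graph without self-loops contains a cycle, then the
partial bijection semigroup generated by the edge maps has a non-central
idempotent and is not `R`-trivial. -/
theorem cycle_noncentral_idem_not_rtrivial (V : Type*) [Fintype V]
    [DecidableEq V] (E : V → V → Prop) (hloop : ∀ v : V, ¬ E v v)
    (hcyc : ∃ v : V, Relation.TransGen E v v) :
    (∃ e : PEquiv V V, EdgeGen E e ∧ e.trans e = e ∧
      ∃ s : PEquiv V V, EdgeGen E s ∧ e.trans s ≠ s.trans e) ∧
    ¬ (∀ s t : PEquiv V V, EdgeGen E s → EdgeGen E t →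
        ((s = t ∨ ∃ x, EdgeGen E x ∧ s.trans x = t) ∧
         (t = s ∨ ∃ x, EdgeGen E x ∧ t.trans x = s)) → s = t) := by
  obtain ⟨v, hv⟩ := hcyc
  obtain ⟨w, hvw, hwv⟩ := Relation.TransGen.head'_iff.mp hv
  have hwne : w ≠ v := fun h => hloop v (h ▸ hvw)
  have hwvT : Relation.TransGen E w v := by
    rcases hwv.cases_head with rfl | ⟨c, hc, hcv⟩
    · exact absurd rfl hwne
    · exact Relation.TransGen.head' hc hcv
  constructor
  · refine ⟨PEquiv.single v v, edgeGen_single_of_transGen hv,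
      PEquiv.single_trans_single v v v, PEquiv.single v w, .single hvw, ?_⟩
    rw [PEquiv.single_trans_single, PEquiv.single_trans_single_of_ne hwne]
    intro h
    have := congrArg (fun p : PEquiv V V => p v) h
    simp [PEquiv.single_apply] at this
  · intro H
    refine single_ne_of_ne (V := V) (v := v) (Ne.symm hwne)
      (H (PEquiv.single v v) (PEquiv.single v w)
        (edgeGen_single_of_transGen hv) (.single hvw) ⟨?_, ?_⟩)
    · exact Or.inr ⟨PEquiv.single v w, .single hvw, PEquiv.single_trans_single v v w⟩
    · exact Or.inr ⟨PEquiv.single w v, edgeGen_single_of_transGen hwvT,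
        PEquiv.single_trans_single v w v⟩
end

section
/- Let a, b ∈ I_n with a = uv and b = vu for some u, v ∈ I_n. Then for every k, the map sending a cycle (x₁,...,x_k) of a to (x₁u,...,x_ku) is a well-defined injection from the k-cycles of a to the k-cycles of b; consequently a and b have the same number of cycles of each length. -/
/-- `x : ZMod k → Fin n` is a cycle of length `k` of the partial bijection
`s`: its points are distinct and `s` maps each point to the next one
(cyclically). -/
def IsCycleOf {n : ℕ} (s : PEquiv (Fin n) (Fin n)) {k : ℕ}
    (x : ZMod k → Fin n) : Prop :=
  Function.Injective x ∧ ∀ i : ZMod k, s (x i) = some (x (i + 1))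

/-- A cyclic shift of a cycle of `s` is again a cycle of `s`. -/
lemma IsCycleOf.shift {n k : ℕ} {s : PEquiv (Fin n) (Fin n)} {x : ZMod k → Fin n}
    (hx : IsCycleOf s x) (c : ZMod k) : IsCycleOf s (fun i => x (i + c)) := by
  constructor
  · intro i j h
    exact add_right_cancel (hx.1 h)
  · intro i
    have := hx.2 (i + c)
    simpa [add_right_comm] using this

/-- For a cycle `x` of `u.trans v` there is a cycle `y` of `v.trans u`
with `u (x i) = some (y i)` and `v (y i) = some (x (i+1))` for all `i`. -/
lemma exists_cycle_step {n k : ℕ} (u v : PEquiv (Fin n) (Fin n)) {x : ZMod k → Fin n}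
    (hx : IsCycleOf (u.trans v) x) :
    ∃ y : ZMod k → Fin n, IsCycleOf (v.trans u) y ∧
      ∀ i, u (x i) = some (y i) ∧ v (y i) = some (x (i + 1)) := by
  have h : ∀ i : ZMod k, ∃ c, u (x i) = some c ∧ v c = some (x (i + 1)) := by
    intro i
    exact (PEquiv.trans_eq_some u v (x i) (x (i + 1))).1 (hx.2 i)
  choose y hy1 hy2 using h
  refine ⟨y, ⟨?_, ?_⟩, fun i => ⟨hy1 i, hy2 i⟩⟩
  · intro i j hij
    have : x (i + 1) = x (j + 1) := by
      have h1 := hy2 i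
      have h2 := hy2 j
      rw [hij, h2] at h1
      exact (Option.some.inj h1).symm
    have := hx.1 this
    exact add_right_cancel this
  · intro i
    exact (PEquiv.trans_eq_some v u (y i) (y (i + 1))).2
      ⟨x (i + 1), hy2 i, hy1 (i + 1)⟩

/-- If `a = u * v` and `b = v * u` in `I_n`, then for every `k` the map
sending a `k`-cycle `(x₁, …, x_k)` of `a` to `(x₁u, …, x_ku)` is a
well-defined injection from the `k`-cycles of `a` to the `k`-cycles of `b`;
consequently `a` and `b` have the same number of cycles of each length. -/
theorem cycles_of_uv_vs_vu (n k : ℕ) (u v : PEquiv (Fin n) (Fin n)) :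
    ∃ F : {x : ZMod k → Fin n // IsCycleOf (u.trans v) x} →
          {y : ZMod k → Fin n // IsCycleOf (v.trans u) y},
      (∀ x i, u (x.1 i) = some ((F x).1 i)) ∧ Function.Injective F ∧
      Nat.card {x : ZMod k → Fin n // IsCycleOf (u.trans v) x} =
        Nat.card {y : ZMod k → Fin n // IsCycleOf (v.trans u) y} := by
  classical
  have stepF := fun (x : {x : ZMod k → Fin n // IsCycleOf (u.trans v) x}) =>
    exists_cycle_step u v x.2
  have stepG := fun (y : {y : ZMod k → Fin n // IsCycleOf (v.trans u) y}) =>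
    exists_cycle_step v u y.2
  set F : {x : ZMod k → Fin n // IsCycleOf (u.trans v) x} →
      {y : ZMod k → Fin n // IsCycleOf (v.trans u) y} :=
    fun x => ⟨(stepF x).choose, (stepF x).choose_spec.1⟩ with hFdef
  set G : {y : ZMod k → Fin n // IsCycleOf (v.trans u) y} →
      {x : ZMod k → Fin n // IsCycleOf (u.trans v) x} :=
    fun y => ⟨(stepG y).choose, (stepG y).choose_spec.1⟩ with hGdef
  have hF : ∀ x i, u (x.1 i) = some ((F x).1 i) :=
    fun x i => ((stepF x).choose_spec.2 i).1
  have hF2 : ∀ x i, v ((F x).1 i) = some (x.1 (i + 1)) :=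
    fun x i => ((stepF x).choose_spec.2 i).2
  have hG : ∀ y i, v (y.1 i) = some ((G y).1 i) :=
    fun y i => ((stepG y).choose_spec.2 i).1
  have hFinj : Function.Injective F := by
    intro x x' h
    apply Subtype.ext
    funext i
    have h1 := hF x i
    have h2 := hF x' i
    rw [h] at h1
    exact u.inj (Option.mem_def.2 h1) (Option.mem_def.2 h2)
  have hFsurj : Function.Surjective F := by
    intro y
    set y' : {y : ZMod k → Fin n // IsCycleOf (v.trans u) y} :=
      ⟨fun i => y.1 (i + (-1)), y.2.shift (-1)⟩ with hy'
    refine ⟨G y', ?_⟩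
    apply Subtype.ext
    funext i
    -- v (y'.1 i) = some ((G y').1 i), and (v.trans u) (y'.1 i) = some (y'.1 (i+1))
    have hcyc := y'.2.2 i
    obtain ⟨c, hc1, hc2⟩ := (PEquiv.trans_eq_some v u (y'.1 i) (y'.1 (i + 1))).1 hcyc
    have hc : c = (G y').1 i := by
      have := hG y' i
      rw [hc1] at this
      exact Option.some.inj this
    subst hc
    -- so u ((G y').1 i) = some (y'.1 (i+1)) = some (y.1 i)
    have h1 := hF (G y') i
    rw [hc2] at h1
    have : y'.1 (i + 1) = y.1 i := by
      show y.1 (i + 1 + (-1)) = y.1 i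
      norm_num
    rw [this] at h1
    exact (Option.some.inj h1).symm
  exact ⟨F, hF, hFinj, Nat.card_eq_of_bijective F ⟨hFinj, hFsurj⟩⟩
end

section
/- Let a, b ∈ I_n with a = uv and b = vu. Then for every chain [x₁,...,x_k] of a with k > 1, either x_k ∉ dom(u), or the points x₁u, ..., x_ku begin a chain of b of length at least k−1; in particular each chain of a of length k > 1 maps under u to a chain of b of length at least k−1. -/
/-- `x : Fin k → Fin n` is a chain of length `k` of the partial bijection
`s`: its points are distinct, `s` maps each point to the next one, and the
last point is outside the domain of `s`. -/
def IsChainOf {n : ℕ} (s : PEquiv (Fin n) (Fin n)) {k : ℕ}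
    (x : Fin k → Fin n) : Prop :=
  Function.Injective x ∧
  (∀ i : Fin k, ∀ h : i.val + 1 < k, s (x i) = some (x ⟨i.val + 1, h⟩)) ∧
  ∀ i : Fin k, i.val + 1 = k → s (x i) = none

/-- Let `a = u * v` and `b = v * u` in `I_n`.  For every chain
`[x₁, …, x_k]` of `a` with `k > 1`, either `x_k ∉ dom u`, or all points
`x₁u, …, x_ku` are defined and form `b`-consecutive distinct points, i.e.
they begin a chain of `b` of length at least `k - 1`. -/
theorem chains_of_uv_vs_vu (n k : ℕ) (hk : 1 < k)
    (u v : PEquiv (Fin n) (Fin n)) (x : Fin k → Fin n)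
    (hx : IsChainOf (u.trans v) x) :
    (∃ i : Fin k, i.val + 1 = k ∧ u (x i) = none) ∨
    ∃ y : Fin k → Fin n, Function.Injective y ∧
      (∀ i : Fin k, u (x i) = some (y i)) ∧
      ∀ i : Fin k, ∀ h : i.val + 1 < k,
        (v.trans u) (y i) = some (y ⟨i.val + 1, h⟩) := by
  obtain ⟨hinj, hstep, hlast⟩ := hx
  by_cases hu : u (x ⟨k - 1, by omega⟩) = none
  · exact Or.inl ⟨⟨k - 1, by omega⟩, by simp; omega, hu⟩
  · right
    have hsome : ∀ i : Fin k, ∃ w, u (x i) = some w := by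
      intro i
      by_cases h : i.val + 1 < k
      · obtain ⟨w, hw, -⟩ := (PEquiv.trans_eq_some u v _ _).mp (hstep i h)
        exact ⟨w, hw⟩
      · have hik : i = ⟨k - 1, by omega⟩ := by
          apply Fin.ext; simp; omega
        rw [← hik] at hu
        cases hw : u (x i) with
        | none => exact absurd hw hu
        | some w => exact ⟨w, rfl⟩
    choose y hy using hsome
    refine ⟨y, ?_, hy, ?_⟩
    · intro i j hij
      apply hinj
      have h1 : u.symm (y i) = some (x i) := u.eq_some_iff.mpr (hy i)
      have h2 : u.symm (y j) = some (x j) := u.eq_some_iff.mpr (hy j)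
      rw [hij, h2] at h1
      exact (Option.some_injective _ h1).symm
    · intro i h
      obtain ⟨w, hw1, hw2⟩ := (PEquiv.trans_eq_some u v _ _).mp (hstep i h)
      rw [hy i] at hw1
      obtain rfl : w = y i := (Option.some_injective _ hw1).symm
      exact (PEquiv.trans_eq_some v u _ _).mpr ⟨x ⟨i.val + 1, h⟩, hw2, hy _⟩
end

section
/- Let S be an inverse subsemigroup of I_n, h ∈ I_n, and construct ā elements on A = [n] × [n+1] by (x,y)·s̄ = (x·s, y), together with a, b ∈ I_A defined by (x,y)a = (x,y+1) when y ≤ x and x ∈ dom(h⁻¹), and (x,y)b = (x,y+1) when y ≤ xh and x ∈ dom(h). If h ∈ S, then h̄ a h̄⁻¹ = b on dom(b)-appropriate points and h̄⁻¹ b h̄ = a; i.e., a is ∼_i-conjugate to b in the inverse semigroup generated by {s̄ : s ∈ S} ∪ {a, b}. -/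
/-- Membership in the inverse semigroup generated by a set `T` of partial
bijections (closure under composition and inversion). -/
inductive IGen {α : Type*} (T : Set (PEquiv α α)) : PEquiv α α → Prop
  | base {x : PEquiv α α} : x ∈ T → IGen T x
  | symm {x : PEquiv α α} : IGen T x → IGen T x.symm
  | mul {x y : PEquiv α α} : IGen T x → IGen T y → IGen T (x.trans y)

theorem ptrans_apply {α β γ : Type*} (f : PEquiv α β) (g : PEquiv β γ) (a : α) :
    (f.trans g) a = (f a).bind g := rfl

/-- Let `S` be an inverse subsemigroup of `I_n` and `h ∈ I_n`.  On
`A = [n] × [n+1]` let `bar s` be the lift `(x, y) ↦ (x s, y)` of `s`, and let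
`a, b ∈ I_A` be given by `(x, y) a = (x, y + 1)` when `y ≤ x` and
`x ∈ dom h⁻¹`, and `(x, y) b = (x, y + 1)` when `y ≤ x h` and `x ∈ dom h`.
If `h ∈ S`, then `h̄ a h̄⁻¹ = b` and `h̄⁻¹ b h̄ = a`; in particular `a ∼ᵢ b`
in the inverse semigroup generated by `{s̄ : s ∈ S} ∪ {a, b}`. -/
theorem mem_implies_i_conjugate (n : ℕ) (S : Set (PEquiv (Fin n) (Fin n)))
    (hSmul : ∀ s ∈ S, ∀ t ∈ S, s.trans t ∈ S)
    (hSsymm : ∀ s ∈ S, s.symm ∈ S)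
    (h : PEquiv (Fin n) (Fin n)) (hh : h ∈ S)
    (bar : PEquiv (Fin n) (Fin n) →
      PEquiv (Fin n × Fin (n + 1)) (Fin n × Fin (n + 1)))
    (hbar : ∀ s p, bar s p = (s p.1).map fun z => (z, p.2))
    (A B : PEquiv (Fin n × Fin (n + 1)) (Fin n × Fin (n + 1)))
    (hA : ∀ p, A p =
      if p.2.val ≤ p.1.val ∧ (h.symm p.1).isSome then some (p.1, p.2 + 1)
      else none)
    (hB : ∀ p, B p = (h p.1).bind fun z =>
      if p.2.val ≤ z.val then some (p.1, p.2 + 1) else none) :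
    ((bar h).trans A).trans (bar h).symm = B ∧
    ((bar h).symm.trans B).trans (bar h) = A ∧
    ∃ t, IGen ({q | ∃ s ∈ S, q = bar s} ∪ {A, B}) t ∧
      (t.trans A).trans t.symm = B ∧ (t.symm.trans B).trans t = A := by
  have hbarsymm : ∀ p, (bar h).symm p = (h.symm p.1).map fun z => (z, p.2) := by
    intro p
    cases hz : h.symm p.1 with
    | none =>
      simp only [Option.map_none]
      cases hq : (bar h).symm p with
      | none => rfl
      | some q =>
        rw [PEquiv.eq_some_iff, hbar] at hq
        cases hw : h q.1 with
        | none => rw [hw] at hq; simp at hq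
        | some w =>
          rw [hw] at hq
          simp only [Option.map_some, Option.some.injEq] at hq
          have hw1 : w = p.1 := congrArg Prod.fst hq
          subst hw1
          rw [← PEquiv.eq_some_iff] at hw
          rw [hw] at hz; exact absurd hz (by simp)
    | some z =>
      rw [PEquiv.eq_some_iff] at hz
      have : bar h (z, p.2) = some p := by
        rw [hbar]; simp [hz]
      rw [← PEquiv.eq_some_iff] at this
      rw [this]; rfl
  have h1 : ((bar h).trans A).trans (bar h).symm = B := by
    ext p q
    simp only [ptrans_apply]
    rw [hbar, hB]
    cases hz : h p.1 with
    | none => simp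
    | some z =>
      have hz' : h.symm z = some p.1 := (PEquiv.eq_some_iff h).mpr hz
      simp only [Option.map_some, Option.bind_some, hA, hz', Option.isSome_some,
        and_true]
      by_cases hle : p.2.val ≤ z.val
      · simp [hle, hbarsymm, hz']
      · simp [hle]
  have h2 : ((bar h).symm.trans B).trans (bar h) = A := by
    ext p q
    simp only [ptrans_apply]
    rw [hbarsymm, hA]
    cases hz : h.symm p.1 with
    | none => simp [hz]
    | some z =>
      have hz' : h z = some p.1 := (PEquiv.eq_some_iff h).mp hz
      simp only [Option.map_some, Option.bind_some, hB, hz', Option.isSome_some,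
        and_true]
      by_cases hle : p.2.val ≤ p.1.val
      · simp [hle, hbar, hz']
      · simp [hle]
  exact ⟨h1, h2, bar h, IGen.base (Or.inl ⟨h, hh, rfl⟩), h1, h2⟩
end

section
/- With the construction on A = [n] × [n+1] as above, if g ∈ I_n satisfies ḡ a ḡ⁻¹ = b and ḡ⁻¹ b ḡ = a (where ḡ acts on the first coordinate), then g agrees with h on dom(h): for every x ∈ dom(h), x·g = x·h. -/
/-- With the construction on `A = [n] × [n+1]`: `a, b ∈ I_A` are given by
`(x, y) a = (x, y + 1)` when `y ≤ x` and `x ∈ dom h⁻¹`, and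
`(x, y) b = (x, y + 1)` when `y ≤ x h` and `x ∈ dom h`, and `ḡ` is the lift
`(x, y) ↦ (x g, y)` of `g ∈ I_n`.  If `ḡ a ḡ⁻¹ = b` and `ḡ⁻¹ b ḡ = a`, then
`g` agrees with `h` on `dom h`. -/
theorem conjugator_agrees_with_h (n : ℕ) (h g : PEquiv (Fin n) (Fin n))
    (gbar : PEquiv (Fin n × Fin (n + 1)) (Fin n × Fin (n + 1)))
    (hgbar : ∀ p, gbar p = (g p.1).map fun z => (z, p.2))
    (A B : PEquiv (Fin n × Fin (n + 1)) (Fin n × Fin (n + 1)))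
    (hA : ∀ p, A p =
      if p.2.val ≤ p.1.val ∧ (h.symm p.1).isSome then some (p.1, p.2 + 1)
      else none)
    (hB : ∀ p, B p = (h p.1).bind fun z =>
      if p.2.val ≤ z.val then some (p.1, p.2 + 1) else none)
    (hc1 : (gbar.trans A).trans gbar.symm = B)
    (hc2 : (gbar.symm.trans B).trans gbar = A) :
    ∀ x z : Fin n, h x = some z → g x = some z := by
  intro x z hz
  have happ : ∀ p : Fin n × Fin (n+1),
      (((gbar p).bind A).bind gbar.symm) = B p := by
    intro p
    have := congrArg (fun f => f p) hc1
    exact this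
  -- existence of w
  have hzn : (z : ℕ) < n := z.isLt
  obtain ⟨w, hw⟩ : ∃ w, g x = some w := by
    have h0 := happ (x, 0)
    rw [hB, hgbar, hz] at h0
    simp only at h0
    cases hg : g x with
    | none => rw [hg] at h0; simp at h0
    | some w => exact ⟨w, rfl⟩
  -- key equivalence for each y
  have key : ∀ y : Fin (n+1), ((y : ℕ) ≤ (w : ℕ) ∧ (h.symm w).isSome) ↔ (y : ℕ) ≤ (z : ℕ) := by
    intro y
    have h0 := happ (x, y)
    rw [hB, hgbar, hz, hw] at h0
    simp only [Option.map_some, Option.bind_some] at h0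
    rw [hA] at h0
    simp only at h0
    have hsymm : gbar.symm ((w, y + 1) : Fin n × Fin (n+1)) = some (x, y + 1) := by
      rw [gbar.eq_some_iff, hgbar, hw]; rfl
    constructor
    · intro hc
      rw [if_pos hc, Option.bind_some, hsymm] at h0
      by_contra hle
      rw [if_neg hle] at h0
      exact Option.some_ne_none _ h0
    · intro hc
      rw [if_pos hc] at h0
      by_contra hcc
      rw [if_neg hcc] at h0
      simp at h0
  have hwn : (w : ℕ) < n + 1 := Nat.lt_succ_of_lt w.isLt
  have hsome : (h.symm w).isSome := ((key 0).mpr (Nat.zero_le _)).2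
  have h1 : (w : ℕ) ≤ (z : ℕ) := (key ⟨w, hwn⟩).mp ⟨le_refl _, hsome⟩
  have h2 : (z : ℕ) ≤ (w : ℕ) := ((key ⟨z, Nat.lt_succ_of_lt hzn⟩).mpr (le_refl _)).1
  rw [hw]
  congr 1
  exact Fin.ext (le_antisymm h1 h2)
end
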